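/- Let K be a field, R = K[y], σ an endomorphism of R with deg_y(σ(y)) = s > 1, δ a σ-derivation, and S = R[x; σ, δ] the Ore extension. If a ∈ S has x-degree m > 0 with leading coefficient a_m ∈ K[y], and b ∈ S is nonzero of x-degree n commuting with a, with leading coefficient b_n, then a_m·σ^m(b_n) = b_n·σ^n(a_m), and consequently deg_y(b_n) = (s^n − 1)·deg_y(a_m)/(s^m − 1) is uniquely determined by n. -/

import Mathlib

open Polynomial

/-- Data exhibiting a ring `S` as the Ore extension `R[x; σ, δ]` of `R = K[y]`:
there is an embedding `ι : K[y] →+* S`, an element `x : S` with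
`x · ι r = ι (σ r) · x + ι (δ r)`, `δ` is a `σ`-derivation, and every element
of `S` is uniquely a sum `Σᵢ ι aᵢ · xⁱ`; the unique representation is recorded
by the additive equivalence `rep : S ≃+ (K[y])[x]`. -/
structure OreExt (K : Type*) [Field K] (S : Type*) [Ring S]
    (σ : Polynomial K →+* Polynomial K) (δ : Polynomial K → Polynomial K) where
  ι : Polynomial K →+* S
  x : S
  rep : S ≃+ Polynomial (Polynomial K)
  rep_symm_apply : ∀ p : Polynomial (Polynomial K),
    rep.symm p = p.sum fun i a => ι a * x ^ i
  comm_rule : ∀ r : Polynomial K, x * ι r = ι (σ r) * x + ι (δ r)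
  delta_add : ∀ f g : Polynomial K, δ (f + g) = δ f + δ g
  delta_leibniz : ∀ f g : Polynomial K, δ (f * g) = σ f * δ g + δ f * g

namespace OreExt

variable {K S : Type*} [Field K] [Ring S]
  {σ : Polynomial K →+* Polynomial K} {δ : Polynomial K → Polynomial K}
  (O : OreExt K S σ δ)

lemma symm_monomial (i : ℕ) (r : Polynomial K) :
    O.rep.symm (monomial i r) = O.ι r * O.x ^ i := by
  rw [O.rep_symm_apply, Polynomial.sum_monomial_index]
  simp

lemma symm_mul_x (p : Polynomial (Polynomial K)) :
    O.rep.symm p * O.x = O.rep.symm (p * X) := by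
  induction p using Polynomial.induction_on' with
  | add p q hp hq => rw [map_add, add_mul, hp, hq, add_mul, map_add]
  | monomial i r =>
      rw [symm_monomial, monomial_mul_X, symm_monomial, mul_assoc, ← pow_succ]

lemma ι_mul_symm (c : Polynomial K) (p : Polynomial (Polynomial K)) :
    O.ι c * O.rep.symm p = O.rep.symm (C c * p) := by
  induction p using Polynomial.induction_on' with
  | add p q hp hq => rw [map_add, mul_add, hp, hq, mul_add, map_add]
  | monomial i r =>
      rw [symm_monomial, C_mul_monomial, symm_monomial, ← mul_assoc, ← map_mul]

lemma rep_ι (r : Polynomial K) : O.rep (O.ι r) = C r := by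
  have := O.symm_monomial 0 r
  rw [pow_zero, mul_one] at this
  rw [← this, AddEquiv.apply_symm_apply, monomial_zero_left]

lemma rep_mul_x (u : S) : O.rep (u * O.x) = O.rep u * X := by
  conv_lhs => rw [← O.rep.symm_apply_apply u]
  rw [symm_mul_x, AddEquiv.apply_symm_apply]

lemma rep_ι_mul (c : Polynomial K) (u : S) :
    O.rep (O.ι c * u) = C c * O.rep u := by
  conv_lhs => rw [← O.rep.symm_apply_apply u]
  rw [ι_mul_symm, AddEquiv.apply_symm_apply]

lemma rep_mul_x_pow (u : S) (j : ℕ) : O.rep (u * O.x ^ j) = O.rep u * X ^ j := by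
  induction j with
  | zero => simp
  | succ j ih => rw [pow_succ, ← mul_assoc, rep_mul_x, ih, pow_succ, mul_assoc]

lemma key (i : ℕ) (r : Polynomial K) :
    (O.rep (O.x ^ i * O.ι r)).natDegree ≤ i ∧
      (O.rep (O.x ^ i * O.ι r)).coeff i = (⇑σ)^[i] r := by
  induction i generalizing r with
  | zero =>
      rw [pow_zero, one_mul, rep_ι]
      simp
  | succ i ih =>
      have h1 : O.x ^ (i + 1) * O.ι r
          = (O.x ^ i * O.ι (σ r)) * O.x + O.x ^ i * O.ι (δ r) := by
        rw [pow_succ, mul_assoc, O.comm_rule, mul_add, mul_assoc]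
      rw [h1, map_add, rep_mul_x]
      obtain ⟨h2, h3⟩ := ih (σ r)
      obtain ⟨h4, h5⟩ := ih (δ r)
      constructor
      · refine natDegree_add_le_iff_left _ _ (h4.trans i.le_succ) |>.mpr ?_
        exact natDegree_mul_le.trans (by simpa using Nat.add_le_add h2 (natDegree_X_le (R := Polynomial K)))
      · rw [coeff_add, coeff_mul_X, h3,
          coeff_eq_zero_of_natDegree_lt (lt_of_le_of_lt h4 i.lt_succ_self), add_zero,
          ← Function.iterate_succ_apply]

lemma term_bound (c d : Polynomial K) (i j : ℕ) :
    (O.rep (O.ι c * (O.x ^ i * O.ι d) * O.x ^ j)).natDegree ≤ i + j ∧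
      (O.rep (O.ι c * (O.x ^ i * O.ι d) * O.x ^ j)).coeff (i + j)
        = c * (⇑σ)^[i] d := by
  obtain ⟨h1, h2⟩ := O.key i d
  rw [rep_mul_x_pow, rep_ι_mul]
  constructor
  · refine natDegree_mul_le.trans ?_
    have : (C c * O.rep (O.x ^ i * O.ι d)).natDegree ≤ i :=
      natDegree_mul_le.trans (by simpa using h1)
    simpa using Nat.add_le_add this (natDegree_X_pow_le (R := Polynomial K) j)
  · rw [coeff_mul_X_pow, coeff_C_mul, h2]



lemma coeff_rep_mul (a b : S) :
    (O.rep (a * b)).coeff ((O.rep a).natDegree + (O.rep b).natDegree)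
      = (O.rep a).leadingCoeff
        * (⇑σ)^[(O.rep a).natDegree] ((O.rep b).leadingCoeff) := by
  set m := (O.rep a).natDegree with hm
  set n := (O.rep b).natDegree with hn
  have hrep : ∀ u : S, u = ∑ i ∈ Finset.range ((O.rep u).natDegree + 1),
      O.ι ((O.rep u).coeff i) * O.x ^ i := fun u => by
    conv_lhs => rw [← O.rep.symm_apply_apply u, O.rep_symm_apply]
    exact (O.rep u).sum_over_range' (by simp) _ (Nat.lt_succ_self _)
  have hab : a * b = ∑ i ∈ Finset.range (m + 1), ∑ j ∈ Finset.range (n + 1),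
      O.ι ((O.rep a).coeff i) * (O.x ^ i * O.ι ((O.rep b).coeff j)) * O.x ^ j := by
    conv_lhs => rw [hrep a, hrep b]
    rw [Finset.sum_mul_sum]
    refine Finset.sum_congr rfl fun i _ => Finset.sum_congr rfl fun j _ => ?_
    simp only [mul_assoc]
  rw [hab]
  rw [map_sum, Polynomial.finset_sum_coeff]
  rw [Finset.sum_eq_single_of_mem m (Finset.self_mem_range_succ m)]
  · rw [map_sum, Polynomial.finset_sum_coeff]
    rw [Finset.sum_eq_single_of_mem n (Finset.self_mem_range_succ n)]
    · rw [(O.term_bound _ _ m n).2, leadingCoeff, leadingCoeff]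
    · intro j hj hjn
      apply coeff_eq_zero_of_natDegree_lt
      refine lt_of_le_of_lt (O.term_bound _ _ m j).1 ?_
      have : j < n := lt_of_le_of_ne (Nat.lt_succ_iff.mp (Finset.mem_range.mp hj)) hjn
      omega
  · intro i hi him
    rw [map_sum, Polynomial.finset_sum_coeff]
    refine Finset.sum_eq_zero fun j hj => ?_
    apply coeff_eq_zero_of_natDegree_lt
    refine lt_of_le_of_lt (O.term_bound _ _ i j).1 ?_
    have h1 : i < m := lt_of_le_of_ne (Nat.lt_succ_iff.mp (Finset.mem_range.mp hi)) him
    have h2 : j ≤ n := Nat.lt_succ_iff.mp (Finset.mem_range.mp hj)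
    omega

end OreExt

/-- The restriction of an endomorphism of `K[y]` to constants. -/
noncomputable def kappa {K : Type*} [Field K] (σ : Polynomial K →+* Polynomial K) : K →+* K where
  toFun c := (σ (C c)).coeff 0
  map_one' := by simp
  map_zero' := by simp
  map_mul' c d := by show (σ (C (c*d))).coeff 0 = _; rw [C_mul, map_mul, mul_coeff_zero]
  map_add' c d := by show (σ (C (c+d))).coeff 0 = _; rw [C_add, map_add, coeff_add]

lemma sigma_C {K : Type*} [Field K] (σ : Polynomial K →+* Polynomial K) (c : K) :
    σ (C c) = C (kappa σ c) := by
  rcases eq_or_ne c 0 with rfl | hc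
  · simp [kappa]
  · have hu : IsUnit (σ (C c)) := (isUnit_C.mpr (isUnit_iff_ne_zero.mpr hc)).map σ
    obtain ⟨r, -, hr⟩ := Polynomial.isUnit_iff.mp hu
    rw [← hr]
    simp [kappa, ← hr]

lemma sigma_eq_comp {K : Type*} [Field K] (σ : Polynomial K →+* Polynomial K)
    (f : Polynomial K) : σ f = (f.map (kappa σ)).comp (σ X) := by
  have h : σ = (Polynomial.eval₂RingHom (C.comp (kappa σ)) (σ X)) := by
    apply Polynomial.ringHom_ext
    · intro c
      rw [sigma_C, coe_eval₂RingHom, eval₂_C, RingHom.comp_apply]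
    · simp
  have h2 := DFunLike.congr_fun h f
  rw [h2, coe_eval₂RingHom, comp, eval₂_map]

lemma sigma_natDegree {K : Type*} [Field K] (σ : Polynomial K →+* Polynomial K)
    (f : Polynomial K) (hf : f ≠ 0) (h0 : (σ X).natDegree ≠ 0) :
    σ f ≠ 0 ∧ (σ f).natDegree = (σ X).natDegree * f.natDegree := by
  have hk : Function.Injective (kappa σ) := (kappa σ).injective
  have hmap : f.map (kappa σ) ≠ 0 := by
    simpa [Polynomial.map_eq_zero_iff hk] using hf
  have hdeg : (f.map (kappa σ)).natDegree = f.natDegree :=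
    natDegree_map_eq_of_injective hk f
  constructor
  · rw [sigma_eq_comp, ← leadingCoeff_ne_zero, leadingCoeff_comp h0]
    exact mul_ne_zero (leadingCoeff_ne_zero.mpr hmap)
      (pow_ne_zero _ (leadingCoeff_ne_zero.mpr (ne_zero_of_natDegree_gt
        (Nat.pos_of_ne_zero h0))))
  · rw [sigma_eq_comp, natDegree_comp, hdeg, mul_comm]

lemma sigma_iter_natDegree {K : Type*} [Field K] (σ : Polynomial K →+* Polynomial K)
    (h0 : (σ X).natDegree ≠ 0) (k : ℕ) (f : Polynomial K) (hf : f ≠ 0) :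
    (⇑σ)^[k] f ≠ 0 ∧ ((⇑σ)^[k] f).natDegree = (σ X).natDegree ^ k * f.natDegree := by
  induction k with
  | zero => simpa using hf
  | succ k ih =>
      obtain ⟨ih1, ih2⟩ := ih
      obtain ⟨h1, h2⟩ := sigma_natDegree σ ((⇑σ)^[k] f) ih1 h0
      rw [Function.iterate_succ_apply']
      exact ⟨h1, by rw [h2, ih2]; ring⟩

theorem stmt13 {K S : Type*} [Field K] [Ring S]
    (σ : Polynomial K →+* Polynomial K) (δ : Polynomial K → Polynomial K)
    (O : OreExt K S σ δ)
    (s : ℕ) (hs : (σ Polynomial.X).natDegree = s) (hs1 : 1 < s)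
    (a b : S) (hab : a * b = b * a) (hb : b ≠ 0)
    (m : ℕ) (hm : (O.rep a).natDegree = m) (hm0 : 0 < m)
    (n : ℕ) (hn : (O.rep b).natDegree = n) :
    (O.rep a).leadingCoeff * (⇑σ)^[m] (O.rep b).leadingCoeff
      = (O.rep b).leadingCoeff * (⇑σ)^[n] (O.rep a).leadingCoeff ∧
    (s ^ m - 1) * (O.rep b).leadingCoeff.natDegree
      = (s ^ n - 1) * (O.rep a).leadingCoeff.natDegree := by
  have h0 : (σ X).natDegree ≠ 0 := by rw [hs]; omega
  have hpb : O.rep b ≠ 0 := by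
    intro h
    apply hb
    have := congrArg O.rep.symm h
    simpa using this
  have hpa : O.rep a ≠ 0 := by
    intro h
    rw [h, natDegree_zero] at hm
    omega
  have hA0 : (O.rep a).leadingCoeff ≠ 0 := leadingCoeff_ne_zero.mpr hpa
  have hB0 : (O.rep b).leadingCoeff ≠ 0 := leadingCoeff_ne_zero.mpr hpb
  have e1 := O.coeff_rep_mul a b
  have e2 := O.coeff_rep_mul b a
  rw [hm, hn] at e1 e2
  rw [hab, Nat.add_comm m n] at e1
  have first : (O.rep a).leadingCoeff * (⇑σ)^[m] (O.rep b).leadingCoeff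
      = (O.rep b).leadingCoeff * (⇑σ)^[n] (O.rep a).leadingCoeff := e1.symm.trans e2
  refine ⟨first, ?_⟩
  obtain ⟨hAiter0, hAiter⟩ := sigma_iter_natDegree σ h0 n (O.rep a).leadingCoeff hA0
  obtain ⟨hBiter0, hBiter⟩ := sigma_iter_natDegree σ h0 m (O.rep b).leadingCoeff hB0
  have hdeg := congrArg natDegree first
  rw [natDegree_mul hA0 hBiter0, natDegree_mul hB0 hAiter0, hAiter, hBiter, hs] at hdeg
  have hle1 : (O.rep b).leadingCoeff.natDegree
      ≤ s ^ m * (O.rep b).leadingCoeff.natDegree :=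
    Nat.le_mul_of_pos_left _ (pow_pos (by omega) m)
  have hle2 : (O.rep a).leadingCoeff.natDegree
      ≤ s ^ n * (O.rep a).leadingCoeff.natDegree :=
    Nat.le_mul_of_pos_left _ (pow_pos (by omega) n)
  rw [Nat.sub_one_mul, Nat.sub_one_mul]
  set P := s ^ m * (O.rep b).leadingCoeff.natDegree with hP
  set Q := s ^ n * (O.rep a).leadingCoeff.natDegree with hQ
  clear_value P Q
  omega
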